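/- For every left divisibility monoid M with hypercube alphabet H, the map N sending a word w over the irreducibles to its right normal form satisfies the recursion N(ε) = 1 and N(w) = N(λ(w,1)) · τ(w,1) for w ≠ ε, where τ and λ are the transition and output functions of the transducer with state set H, transition τ(x,a) = h(ax), and output λ(x,a) = u for any word u with ax̄ = ū·h(ax̄); moreover |λ(w,1)| < |w|, so the recursion computes N(w) in at most |w| iterations (quadratic time). -/

import Mathlib

section Defs
variable {M : Type*} [Monoid M]

/-- `a` left-divides `b` (`b` is a right multiple of `a`). -/
def LDvd (a b : M) : Prop := ∃ d, b = a * d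

/-- `a` right-divides `b` (`b` is a left multiple of `a`). -/
def RDvd (a b : M) : Prop := ∃ d, b = d * a

/-- `a` is an irreducible element of the monoid. -/
def IsIrred (a : M) : Prop := a ≠ 1 ∧ ∀ b c, a = b * c → b = 1 ∨ c = 1

/-- `c` is a right lcm of `a` and `b`. -/
def IsRightLcm (a b c : M) : Prop :=
  LDvd a c ∧ LDvd b c ∧ ∀ m, LDvd a m → LDvd b m → LDvd c m

/-- `c` is a right lcm of the set `s`. -/
def IsRightLcmSet (s : Set M) (c : M) : Prop :=
  (∀ x ∈ s, LDvd x c) ∧ ∀ m, (∀ x ∈ s, LDvd x m) → LDvd c m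

/-- A hypercube: a right lcm of a finite set of irreducible elements. -/
def IsHypercube (h : M) : Prop :=
  ∃ s : Finset M, (∀ x ∈ s, IsIrred x) ∧ IsRightLcmSet (↑s) h

/-- `h` is the maximal hypercube right-dividing `a`. -/
def IsMaxHC (a h : M) : Prop :=
  IsHypercube h ∧ RDvd h a ∧ ∀ k, IsHypercube k → RDvd k a → RDvd k h

/-- The list `L = [h_p, …, h_1]` of nontrivial hypercubes is a right normal form:
`h_i` is the maximal hypercube right-dividing `h_p ⋯ h_i`. -/
def IsRNF (hmap : M → M) (L : List M) : Prop :=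
  (∀ x ∈ L, IsHypercube x ∧ x ≠ 1) ∧
  ∀ n (hn : n < L.length), hmap ((L.take (n + 1)).prod) = L.get ⟨n, hn⟩

end Defs

/-- A left divisibility monoid: cancellative, generated by its finitely many
irreducibles, any two elements have a left gcd, and every set of left divisors
is a finite distributive lattice under left divisibility. -/
def IsLDM (M : Type*) [Monoid M] : Prop :=
  (∀ a b c : M, a * b = a * c → b = c) ∧
  (∀ a b c : M, b * a = c * a → b = c) ∧
  (∃ S : Finset M, (∀ x ∈ S, IsIrred x) ∧ Submonoid.closure (S : Set M) = ⊤) ∧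
  (∀ a b : M, ∃ g, LDvd g a ∧ LDvd g b ∧ ∀ c, LDvd c a → LDvd c b → LDvd c g) ∧
  (∀ a : M, {b : M | LDvd b a}.Finite) ∧
  (∀ a : M, ∃ i : DistribLattice {b : M // LDvd b a},
      ∀ x y : {b : M // LDvd b a}, i.le x y ↔ LDvd x.1 y.1)

section Aux
variable {M : Type*} [Monoid M]

lemma ldvd_refl (a : M) : LDvd a a := ⟨1, (mul_one a).symm⟩

lemma ldvd_trans {a b c : M} (h1 : LDvd a b) (h2 : LDvd b c) : LDvd a c := by
  obtain ⟨d, rfl⟩ := h1; obtain ⟨e, rfl⟩ := h2; exact ⟨d * e, mul_assoc _ _ _⟩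

lemma one_ldvd (a : M) : LDvd 1 a := ⟨a, (one_mul a).symm⟩

lemma rdvd_trans {a b c : M} (h1 : RDvd a b) (h2 : RDvd b c) : RDvd a c := by
  obtain ⟨d, rfl⟩ := h1; obtain ⟨e, rfl⟩ := h2; exact ⟨e * d, (mul_assoc _ _ _).symm⟩

lemma unit_eq_one (hM : IsLDM M) {a b : M} (h : a * b = 1) : a = 1 ∧ b = 1 := by
  obtain ⟨i, hi⟩ := hM.2.2.2.2.2 (1 : M)
  letI := i
  have ha : a = 1 := by
    have h1 : (⟨a, ⟨b, h.symm⟩⟩ : {b : M // LDvd b (1 : M)}) = ⟨1, one_ldvd 1⟩ :=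
      le_antisymm ((hi _ _).mpr ⟨b, h.symm⟩) ((hi _ _).mpr (one_ldvd a))
    exact congrArg Subtype.val h1
  subst ha
  exact ⟨rfl, by rw [one_mul] at h; exact h⟩

lemma rdvd_antisymm (hM : IsLDM M) {a b : M} (h1 : RDvd a b) (h2 : RDvd b a) : a = b := by
  obtain ⟨d, hd⟩ := h1; obtain ⟨e, he⟩ := h2
  rw [hd, ← mul_assoc] at he
  have : e * d = 1 := hM.2.1 a (e * d) 1 (by rw [one_mul]; exact he.symm)
  rw [(unit_eq_one hM this).2, one_mul] at hd; exact hd.symm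

lemma ldvd_antisymm (hM : IsLDM M) {a b : M} (h1 : LDvd a b) (h2 : LDvd b a) : a = b := by
  obtain ⟨d, hd⟩ := h1; obtain ⟨e, he⟩ := h2
  have hde : d * e = 1 := by
    apply hM.1 a
    rw [mul_one, ← mul_assoc, ← hd]; exact he.symm
  rw [(unit_eq_one hM hde).1, mul_one] at hd; exact hd.symm

lemma irred_hypercube {x : M} (hx : IsIrred x) : IsHypercube x := by
  classical
  refine ⟨{x}, ?_, ?_, ?_⟩
  · intro y hy; rw [Finset.mem_singleton] at hy; exact hy ▸ hx
  · intro y hy; rw [Finset.mem_coe, Finset.mem_singleton] at hy; exact hy ▸ ldvd_refl x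
  · intro m hm; exact hm x (by simp)

lemma ldvd_irred {d x : M} (hx : IsIrred x) (h : LDvd d x) : d = 1 ∨ d = x := by
  obtain ⟨e, he⟩ := h
  rcases hx.2 d e he with h1 | h1
  · exact Or.inl h1
  · right; rw [he, h1, mul_one]

lemma hc_of_ldvd (hM : IsLDM M) {k t : M} (hk : IsHypercube k) (ht : LDvd t k) :
    IsHypercube t := by
  classical
  obtain ⟨s, hsirr, hsub, hslcm⟩ := hk
  obtain ⟨i, hi⟩ := hM.2.2.2.2.2 k
  letI := i
  letI : OrderBot {b : M // LDvd b k} :=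
    { bot := ⟨1, one_ldvd k⟩, bot_le := fun x => (hi _ _).mpr (one_ldvd x.1) }
  refine ⟨s.filter (fun x => LDvd x t), ?_, ?_, ?_⟩
  · intro y hy; rw [Finset.mem_filter] at hy; exact hsirr y hy.1
  · intro y hy; rw [Finset.mem_coe, Finset.mem_filter] at hy; exact hy.2
  · intro m hm
    obtain ⟨g, hgt, hgm, hgmax⟩ := hM.2.2.2.1 t m
    have hgk : LDvd g k := ldvd_trans hgt ht
    have step : ∀ a : {b : M // LDvd b k}, a.1 ∈ s →
        (⟨t, ht⟩ : {b : M // LDvd b k}) ⊓ a ≤ ⟨g, hgk⟩ := by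
      intro a hax
      have hd : LDvd ((⟨t, ht⟩ : {b : M // LDvd b k}) ⊓ a).1 a.1 := (hi _ _).mp inf_le_right
      rcases ldvd_irred (hsirr a.1 hax) hd with h1 | h1
      · exact (hi _ _).mpr (by rw [h1]; exact one_ldvd g)
      · have hxt : LDvd a.1 t := by
          have := (hi _ _).mp (inf_le_left (a := (⟨t, ht⟩ : {b : M // LDvd b k})) (b := a))
          rwa [h1] at this
        have hxm : LDvd a.1 m := hm a.1 (by rw [Finset.mem_coe, Finset.mem_filter]; exact ⟨hax, hxt⟩)
        exact (hi _ _).mpr (by rw [h1]; exact hgmax a.1 hxt hxm)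
    have key1 : (s.attach.image (fun x => (⟨x.1, hsub x.1 (Finset.mem_coe.mpr x.2)⟩ :
        {b : M // LDvd b k}))).sup id = ⟨k, ldvd_refl k⟩ := by
      apply le_antisymm
      · exact Finset.sup_le fun a _ => (hi _ _).mpr a.2
      · refine (hi _ _).mpr (hslcm _ ?_)
        intro x hx
        rw [Finset.mem_coe] at hx
        have hmem : (⟨x, hsub x (Finset.mem_coe.mpr hx)⟩ : {b : M // LDvd b k}) ∈
            s.attach.image (fun x => (⟨x.1, hsub x.1 (Finset.mem_coe.mpr x.2)⟩ :
              {b : M // LDvd b k})) :=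
          Finset.mem_image.mpr ⟨⟨x, hx⟩, Finset.mem_attach _ _, rfl⟩
        exact (hi _ _).mp (Finset.le_sup (f := id) hmem)
    have key2 : (⟨t, ht⟩ : {b : M // LDvd b k}) ≤ ⟨g, hgk⟩ := by
      have h1 : (⟨t, ht⟩ : {b : M // LDvd b k}) =
          (⟨t, ht⟩ : {b : M // LDvd b k}) ⊓ (s.attach.image (fun x => (⟨x.1,
            hsub x.1 (Finset.mem_coe.mpr x.2)⟩ : {b : M // LDvd b k}))).sup id := by
        rw [key1]; exact (inf_eq_left.mpr ((hi _ _).mpr ht)).symm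
      rw [h1, Finset.sup_inf_distrib_left]
      apply Finset.sup_le
      intro a ha
      rw [Finset.mem_image] at ha
      obtain ⟨x, _, rfl⟩ := ha
      exact step _ x.2
    exact ldvd_trans ((hi _ _).mp key2) hgm

end Aux
section Rank
variable {D : Type*}

/-- join-irreducible elements of a lattice with bottom -/
def JIr [Lattice D] [OrderBot D] (p : D) : Prop :=
  p ≠ ⊥ ∧ ∀ x y : D, p = x ⊔ y → p = x ∨ p = y

/-- rank: number of join-irreducibles below `t` -/
noncomputable def rk [Lattice D] [OrderBot D] (t : D) : ℕ :=
  {p | JIr p ∧ p ≤ t}.ncard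

lemma rk_bot [Lattice D] [OrderBot D] : rk (⊥ : D) = 0 := by
  have : {p : D | JIr p ∧ p ≤ ⊥} = ∅ := by
    ext q; simp only [Set.mem_setOf_eq, Set.mem_empty_iff_false, iff_false, not_and]
    intro hq hle; exact hq.1 (le_bot_iff.mp hle)
  rw [rk, this, Set.ncard_empty]

lemma JIr_exists [Lattice D] [Finite D] [OrderBot D] {a b : D} (hab : a < b) :
    ∃ p : D, JIr p ∧ p ≤ b ∧ ¬ p ≤ a := by
  have hS : ({t : D | t ≤ b ∧ ¬ t ≤ a}).Finite := Set.toFinite _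
  have hne : ({t : D | t ≤ b ∧ ¬ t ≤ a}).Nonempty := ⟨b, le_refl b, fun h => absurd (le_antisymm h hab.le) hab.ne'⟩
  obtain ⟨p, hp, hmin0⟩ := hS.exists_minimal hne
  have hmin : ∀ y ∈ {t : D | t ≤ b ∧ ¬ t ≤ a}, y ≤ p → p = y :=
    fun y hy hyp => le_antisymm (hmin0 hy hyp) hyp
  refine ⟨p, ⟨?_, ?_⟩, hp.1, hp.2⟩
  · rintro rfl; exact hp.2 bot_le
  · intro x y hxy
    by_contra hcon
    push_neg at hcon
    have hx : x ≤ a := by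
      by_contra hxa
      have hxp : x ≤ p := hxy ▸ le_sup_left
      exact hcon.1 (hmin x ⟨le_trans hxp hp.1, hxa⟩ hxp)
    have hy : y ≤ a := by
      by_contra hya
      have hyp : y ≤ p := hxy ▸ le_sup_right
      exact hcon.2 (hmin y ⟨le_trans hyp hp.1, hya⟩ hyp)
    exact hp.2 (hxy ▸ sup_le hx hy)

lemma JIr_unique [DistribLattice D] [OrderBot D] {a b p q : D} (hcov : a ⋖ b)
    (hp : JIr p) (hpb : p ≤ b) (hpa : ¬ p ≤ a)
    (hq : JIr q) (hqb : q ≤ b) (hqa : ¬ q ≤ a) : p = q := by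
  have key : ∀ r s : D, JIr r → r ≤ b → ¬ r ≤ a → JIr s → s ≤ b → ¬ s ≤ a → r ≤ s := by
    intro r s hr hrb hra hs hsb hsa
    have hsup : a ⊔ s = b := by
      have h1 : a < a ⊔ s := lt_of_le_of_ne le_sup_left (fun h => hsa (h ▸ le_sup_right))
      have h2 : a ⊔ s ≤ b := sup_le hcov.lt.le hsb
      rcases lt_or_eq_of_le h2 with h3 | h3
      · exact absurd h3 (hcov.2 h1)
      · exact h3
    have hr2 : r = r ⊓ a ⊔ r ⊓ s := by
      rw [← inf_sup_left, hsup]; exact (inf_eq_left.mpr hrb).symm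
    rcases hr.2 _ _ hr2 with h | h
    · exact absurd (h ▸ inf_le_right) hra
    · exact h ▸ inf_le_right
  exact le_antisymm (key p q hp hpb hpa hq hqb hqa) (key q p hq hqb hqa hp hpb hpa)

lemma rk_cov [DistribLattice D] [Finite D] [OrderBot D] {a b : D} (h : a ⋖ b) :
    rk b = rk a + 1 := by
  obtain ⟨p₀, hp₀, hp₀b, hp₀a⟩ := JIr_exists h.lt
  have hset : {p : D | JIr p ∧ p ≤ b} = insert p₀ {p : D | JIr p ∧ p ≤ a} := by
    ext q
    simp only [Set.mem_setOf_eq, Set.mem_insert_iff]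
    constructor
    · rintro ⟨hJ, hqb⟩
      by_cases hqa : q ≤ a
      · exact Or.inr ⟨hJ, hqa⟩
      · exact Or.inl (JIr_unique h hJ hqb hqa hp₀ hp₀b hp₀a)
    · rintro (rfl | ⟨hJ, hqa⟩)
      · exact ⟨hp₀, hp₀b⟩
      · exact ⟨hJ, le_trans hqa h.lt.le⟩
  rw [rk, hset, Set.ncard_insert_of_notMem (fun hmem => hp₀a hmem.2), rk]

end Rank

section Grade
variable {M : Type*} [Monoid M]

lemma len_eq (hM : IsLDM M) {l₁ l₂ : List M} (h1 : ∀ x ∈ l₁, IsIrred x)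
    (h2 : ∀ x ∈ l₂, IsIrred x) (hp : l₁.prod = l₂.prod) : l₁.length = l₂.length := by
  obtain ⟨i, hi⟩ := hM.2.2.2.2.2 l₁.prod
  letI := i
  letI : OrderBot {b : M // LDvd b l₁.prod} :=
    { bot := ⟨1, one_ldvd _⟩, bot_le := fun x => (hi _ _).mpr (one_ldvd x.1) }
  haveI : Finite {b : M // LDvd b l₁.prod} := (hM.2.2.2.2.1 l₁.prod).to_subtype
  have rstep : ∀ (l : List M), (∀ x ∈ l, IsIrred x) →
      ∀ a b : {b : M // LDvd b l₁.prod}, b.1 = a.1 * l.prod → rk b = rk a + l.length := by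
    intro l
    induction l with
    | nil =>
      intro _ a b hb
      have : b = a := Subtype.ext (by rw [hb, List.prod_nil, mul_one])
      rw [this, List.length_nil, add_zero]
    | cons x l ih =>
      intro hirr a b hb
      have hxirr : IsIrred x := hirr x (List.mem_cons_self)
      have hcb : LDvd (a.1 * x) l₁.prod :=
        ldvd_trans ⟨l.prod, by rw [hb, List.prod_cons, mul_assoc]⟩ b.2
      have hcov : a ⋖ (⟨a.1 * x, hcb⟩ : {b : M // LDvd b l₁.prod}) := by
        constructor
        · apply lt_of_le_of_ne ((hi _ _).mpr ⟨x, rfl⟩)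
          intro h
          apply hxirr.1
          apply hM.1 a.1
          rw [mul_one]
          exact (congrArg Subtype.val h).symm
        · intro u h1 h2
          obtain ⟨v, hv⟩ := (hi _ _).mp h1.le
          obtain ⟨w, hw⟩ := (hi _ _).mp h2.le
          have hx : x = v * w := by
            apply hM.1 a.1
            rw [← mul_assoc, ← hv]
            exact hw
          rcases hxirr.2 v w hx with h3 | h3
          · exact h1.ne (Subtype.ext (by rw [hv, h3, mul_one])).symm
          · exact h2.ne (Subtype.ext (by rw [hw, h3, mul_one])).symm
      have hrc := rk_cov hcov
      have hb' : b.1 = (⟨a.1 * x, hcb⟩ : {b : M // LDvd b l₁.prod}).1 * l.prod := by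
        show b.1 = (a.1 * x) * l.prod
        rw [hb, List.prod_cons, mul_assoc]
      rw [ih (fun y hy => hirr y (List.mem_cons_of_mem _ hy)) _ b hb', hrc, List.length_cons]
      omega
  have e1 := rstep l₁ h1 ⊥ ⟨l₁.prod, ldvd_refl _⟩ (one_mul _).symm
  have e2 := rstep l₂ h2 ⊥ ⟨l₁.prod, ldvd_refl _⟩
    (by show l₁.prod = (1 : M) * l₂.prod; rw [one_mul, hp])
  rw [rk_bot] at e1 e2
  omega

lemma prod_ne_one_nil (hM : IsLDM M) {L : List M} (h : ∀ x ∈ L, x ≠ 1)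
    (hp : L.prod = 1) : L = [] := by
  cases L with
  | nil => rfl
  | cons x L =>
    exact absurd (unit_eq_one hM (by rwa [List.prod_cons] at hp)).1
      (h x (List.mem_cons_self))

lemma rnf_last {hmap : M → M} {A : List M} {a : M} (h : IsRNF hmap (A ++ [a])) :
    hmap ((A ++ [a]).prod) = a := by
  have hn : A.length < (A ++ [a]).length := by simp
  have h2 := h.2 A.length hn
  rwa [List.take_of_length_le (by simp), List.get_eq_getElem,
    List.getElem_concat_length rfl] at h2

lemma rnf_drop {hmap : M → M} {A : List M} {a : M} (h : IsRNF hmap (A ++ [a])) :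
    IsRNF hmap A := by
  constructor
  · intro x hx; exact h.1 x (List.mem_append_left _ hx)
  · intro n hn
    have hn' : n < (A ++ [a]).length := by
      simp only [List.length_append, List.length_singleton]; omega
    have h2 := h.2 n hn'
    rw [List.take_append_of_le_length (by omega)] at h2
    rw [List.get_eq_getElem] at h2 ⊢
    rwa [List.getElem_append_left hn] at h2

lemma rnf_unique (hM : IsLDM M) (hmap : M → M) :
    ∀ (n : ℕ) (L L' : List M), L.length ≤ n → IsRNF hmap L → IsRNF hmap L' →
      L.prod = L'.prod → L = L' := by
  intro n
  induction n with
  | zero =>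
    intro L L' hlen h h' hp
    have hL : L = [] := List.length_eq_zero_iff.mp (Nat.le_zero.mp hlen)
    subst hL
    exact (prod_ne_one_nil hM (fun x hx => (h'.1 x hx).2)
      (by rw [← hp, List.prod_nil])).symm
  | succ n ih =>
    intro L L' hlen h h' hp
    rcases List.eq_nil_or_concat L with rfl | ⟨A, a, rfl⟩
    · exact (prod_ne_one_nil hM (fun x hx => (h'.1 x hx).2)
        (by rw [← hp, List.prod_nil])).symm
    rcases List.eq_nil_or_concat L' with rfl | ⟨B, b, rfl⟩
    · exact prod_ne_one_nil hM (fun x hx => (h.1 x hx).2) (by rw [hp, List.prod_nil])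
    rw [List.concat_eq_append] at h hp ⊢
    rw [List.concat_eq_append] at h' hp ⊢
    have ha := rnf_last h
    have hb := rnf_last h'
    have hab : a = b := by rw [← ha, ← hb, hp]
    have hAB : A.prod = B.prod := by
      apply hM.2.1 a
      rw [List.prod_append, List.prod_singleton] at hp
      rw [List.prod_append, List.prod_singleton] at hp
      rw [hp, hab]
    have hlen' : A.length ≤ n := by
      rw [List.length_concat] at hlen; omega
    rw [ih A B hlen' (rnf_drop h) (rnf_drop h') hAB, hab]

end Grade

section Trans
variable {M : Type*} [Monoid M]

lemma hmap_one (hM : IsLDM M) {hmap : M → M} (hspec : ∀ a : M, IsMaxHC a (hmap a)) :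
    hmap (1 : M) = 1 := by
  obtain ⟨d, hd⟩ := (hspec 1).2.1
  exact (unit_eq_one hM hd.symm).2

lemma hmap_mul_irred (hM : IsLDM M) {hmap : M → M} (hspec : ∀ a : M, IsMaxHC a (hmap a))
    {a x : M} (hx : IsIrred x) : hmap (a * x) = hmap (hmap a * x) := by
  obtain ⟨k', hk'⟩ : RDvd x (hmap (a * x)) :=
    (hspec (a * x)).2.2 x (irred_hypercube hx) ⟨a, rfl⟩
  have hk'hc : IsHypercube k' := hc_of_ldvd hM (hspec (a * x)).1 ⟨x, hk'⟩
  obtain ⟨e, he⟩ := (hspec (a * x)).2.1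
  have hea : a = e * k' := by
    apply hM.2.1 x
    rw [he, hk', ← mul_assoc]
  obtain ⟨f, hf⟩ : RDvd k' (hmap a) := (hspec a).2.2 k' hk'hc ⟨e, hea⟩
  have h1 : RDvd (hmap (a * x)) (hmap a * x) := ⟨f, by rw [hf, hk', mul_assoc]⟩
  have h2 : RDvd (hmap (hmap a * x)) (a * x) := by
    obtain ⟨c, hc⟩ := (hspec a).2.1
    obtain ⟨d, hd⟩ := (hspec (hmap a * x)).2.1
    have hkey : a * x = c * (d * hmap (hmap a * x)) := by
      rw [← hd, ← mul_assoc, ← hc]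
    exact ⟨c * d, by rw [hkey, ← mul_assoc]⟩
  apply rdvd_antisymm hM
  · exact (hspec (hmap a * x)).2.2 _ (hspec (a * x)).1 h1
  · exact (hspec (a * x)).2.2 _ (hspec (hmap a * x)).1 h2

end Trans

/-- Theorem 28: the transducer with state set the hypercubes, transition
`τ(x,q) = h(qx)` and output `λ(x,q) = u` where `qx = ū·h(qx)`, computes right
normal forms by the recursion `N(ε) = 1`, `N(w) = N(λ(w,1))·τ(w,1)`; since
`|λ(w,1)| < |w|`, this takes at most `|w|` runs (quadratic time). -/
theorem stmt_19 {M : Type*} [Monoid M] (hM : IsLDM M)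
    (hmap : M → M) (hspec : ∀ a : M, IsMaxHC a (hmap a))
    (lam : M → M → List M)
    (hlam : ∀ (q x : M), IsIrred x →
      (∀ c ∈ lam x q, IsIrred c) ∧ q * x = (lam x q).prod * hmap (q * x))
    (tauE : List M → M → M)
    (htau1 : ∀ q : M, tauE [] q = q)
    (htau2 : ∀ (x : M) (u : List M) (q : M), tauE (x :: u) q = tauE u (hmap (q * x)))
    (lamE : List M → M → List M)
    (hlamE1 : ∀ q : M, lamE [] q = [])
    (hlamE2 : ∀ (x : M) (u : List M) (q : M),
      lamE (x :: u) q = lam x q ++ lamE u (hmap (q * x)))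
    (N : List M → List M)
    (hN : ∀ w : List M, (∀ x ∈ w, IsIrred x) → IsRNF hmap (N w) ∧ (N w).prod = w.prod) :
    N [] = [] ∧
    ∀ w : List M, (∀ x ∈ w, IsIrred x) → w ≠ [] →
      N w = N (lamE w 1) ++ [tauE w 1] ∧ (lamE w 1).length < w.length := by
  have hm1 : hmap (1 : M) = 1 := hmap_one hM hspec
  have tauEq : ∀ (u : List M), (∀ x ∈ u, IsIrred x) → ∀ p : M,
      tauE u (hmap p) = hmap (p * u.prod) := by
    intro u
    induction u with
    | nil => intro _ p; rw [htau1, List.prod_nil, mul_one]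
    | cons x u ih =>
      intro hirr p
      rw [htau2, ← hmap_mul_irred hM hspec (hirr x (List.mem_cons_self)),
        ih (fun y hy => hirr y (List.mem_cons_of_mem _ hy)) (p * x),
        List.prod_cons, mul_assoc]
  have lamIrr : ∀ (u : List M), (∀ x ∈ u, IsIrred x) → ∀ q : M,
      ∀ c ∈ lamE u q, IsIrred c := by
    intro u
    induction u with
    | nil => intro _ q c hc; rw [hlamE1] at hc; exact absurd hc (List.not_mem_nil)
    | cons x u ih =>
      intro hirr q c hc
      rw [hlamE2] at hc
      rcases List.mem_append.mp hc with h | h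
      · exact (hlam q x (hirr x (List.mem_cons_self))).1 c h
      · exact ih (fun y hy => hirr y (List.mem_cons_of_mem _ hy)) _ c h
  have lamP : ∀ (u : List M), (∀ x ∈ u, IsIrred x) → ∀ q : M,
      (lamE u q).prod * tauE u q = q * u.prod := by
    intro u
    induction u with
    | nil => intro _ q; rw [hlamE1, htau1, List.prod_nil, one_mul, mul_one]
    | cons x u ih =>
      intro hirr q
      rw [hlamE2, htau2, List.prod_append, List.prod_cons, mul_assoc,
        ih (fun y hy => hirr y (List.mem_cons_of_mem _ hy)) (hmap (q * x)),
        ← mul_assoc, ← (hlam q x (hirr x (List.mem_cons_self))).2, mul_assoc]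
  have hNnil : N [] = [] := by
    obtain ⟨h1, h2⟩ := hN [] (by intro x hx; exact absurd hx (List.not_mem_nil))
    exact prod_ne_one_nil hM (fun x hx => (h1.1 x hx).2) (by rw [h2, List.prod_nil])
  refine ⟨hNnil, ?_⟩
  intro w hw hwne
  have htau : tauE w 1 = hmap w.prod := by
    have h0 := tauEq w hw 1
    rw [hm1] at h0
    rw [h0, one_mul]
  have hlamirr : ∀ c ∈ lamE w 1, IsIrred c := lamIrr w hw 1
  have hlamprod : (lamE w 1).prod * tauE w 1 = w.prod := by
    have h0 := lamP w hw 1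
    rwa [one_mul] at h0
  have htne : tauE w 1 ≠ 1 := by
    rcases List.eq_nil_or_concat w with rfl | ⟨w', x, hww⟩
    · exact absurd rfl hwne
    · have hx : IsIrred x := hw x (by rw [hww, List.concat_eq_append]; simp)
      have hrd : RDvd x w.prod :=
        ⟨w'.prod, by rw [hww, List.concat_eq_append, List.prod_append, List.prod_singleton]⟩
      obtain ⟨d, hd⟩ := (hspec w.prod).2.2 x (irred_hypercube hx) hrd
      rw [htau]
      intro hcon
      rw [hcon] at hd
      exact hx.1 (unit_eq_one hM hd.symm).2
  obtain ⟨hrnfN, hprodN⟩ := hN w hw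
  obtain ⟨hrnfL, hprodL⟩ := hN (lamE w 1) hlamirr
  constructor
  · apply rnf_unique hM hmap (N w).length _ _ le_rfl hrnfN
    · constructor
      · intro x hx
        rcases List.mem_append.mp hx with h | h
        · exact hrnfL.1 x h
        · rw [List.mem_singleton] at h
          subst h
          refine ⟨?_, htne⟩
          rw [htau]
          exact (hspec w.prod).1
      · intro n hn
        rw [List.length_append, List.length_singleton] at hn
        rcases Nat.lt_or_ge n (N (lamE w 1)).length with h | h
        · have h2 := hrnfL.2 n h
          rw [List.take_append_of_le_length (by omega)]
          rw [List.get_eq_getElem] at h2 ⊢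
          rw [List.getElem_append_left h]
          exact h2
        · have hn' : n = (N (lamE w 1)).length := by omega
          subst hn'
          rw [List.take_of_length_le (by simp), List.prod_append, List.prod_singleton,
            hprodL, hlamprod, List.get_eq_getElem,
            List.getElem_concat_length rfl]
          exact htau.symm
    · rw [List.prod_append, List.prod_singleton, hprodL, hlamprod, hprodN]
  · obtain ⟨S, hSirr, hSgen⟩ := hM.2.2.1
    have hmem : tauE w 1 ∈ Submonoid.closure (S : Set M) := by
      rw [hSgen]; exact Submonoid.mem_top _
    obtain ⟨v, hv, hvp⟩ := Submonoid.exists_list_of_mem_closure hmem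
    have hvne : v ≠ [] := by
      rintro rfl
      exact htne (by rw [← hvp, List.prod_nil])
    have hlen := len_eq hM (l₁ := lamE w 1 ++ v) (l₂ := w) ?_ hw ?_
    · rw [List.length_append] at hlen
      have := List.length_pos_iff.mpr hvne
      omega
    · intro x hx
      rcases List.mem_append.mp hx with h | h
      · exact hlamirr x h
      · exact hSirr x (Finset.mem_coe.mp (hv x h))
    · rw [List.prod_append, hvp, hlamprod]
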